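/- For every n ≥ 5, the cycle C_n is not a 3-threshold graph: there are no thresholds θ_1 < θ_2 < θ_3 and rank function r such that two vertices of C_n are adjacent if and only if their rank sum lies in [θ_1, θ_2) ∪ [θ_3, ∞). -/

import Mathlib

namespace CnNotThreeThresholdAux

open SimpleGraph

variable {n : ℕ} [NeZero n]

private lemma finval1 (hn : 5 ≤ n) : ((1 : Fin n) : ℕ) = 1 := by
  rw [Fin.val_one', Nat.mod_eq_of_lt (by omega)]

private lemma finval2 (hn : 5 ≤ n) : ((2 : Fin n) : ℕ) = 2 := by
  rw [Fin.coe_ofNat_eq_mod, Nat.mod_eq_of_lt (by omega)]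

private lemma finval3 (hn : 5 ≤ n) : ((3 : Fin n) : ℕ) = 3 := by
  rw [Fin.coe_ofNat_eq_mod, Nat.mod_eq_of_lt (by omega)]

private lemma finval4 (hn : 5 ≤ n) : ((4 : Fin n) : ℕ) = 4 := by
  rw [Fin.coe_ofNat_eq_mod, Nat.mod_eq_of_lt (by omega)]

private lemma fne_of_val (c : Fin n) (hc : (c : ℕ) ≠ 0) (x : Fin n) : x + c ≠ x := by
  rw [ne_eq, add_eq_left]
  intro h
  exact hc (by rw [h]; simp)

private lemma fne1 (hn : 5 ≤ n) (x : Fin n) : x + 1 ≠ x :=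
  fne_of_val _ (by rw [finval1 hn]; omega) x

private lemma fne2 (hn : 5 ≤ n) (x : Fin n) : x + 2 ≠ x :=
  fne_of_val _ (by rw [finval2 hn]; omega) x

private lemma fne3 (hn : 5 ≤ n) (x : Fin n) : x + 3 ≠ x :=
  fne_of_val _ (by rw [finval3 hn]; omega) x

private lemma fne4 (hn : 5 ≤ n) (x : Fin n) : x + 4 ≠ x :=
  fne_of_val _ (by rw [finval4 hn]; omega) x

private lemma add12 (x : Fin n) : (x + 1) + 1 = x + 2 := by rw [add_assoc]; norm_num; ext; simp [Fin.val_add]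
private lemma add23 (x : Fin n) : (x + 2) + 1 = x + 3 := by rw [add_assoc]; norm_num; ext; simp [Fin.val_add]
private lemma add34 (x : Fin n) : (x + 3) + 1 = x + 4 := by rw [add_assoc]; norm_num; ext; simp [Fin.val_add]
private lemma add13 (x : Fin n) : (x + 1) + 2 = x + 3 := by rw [add_assoc]; norm_num; ext; simp [Fin.val_add]
private lemma add24 (x : Fin n) : (x + 2) + 2 = x + 4 := by rw [add_assoc]; norm_num; ext; simp [Fin.val_add]
private lemma add14 (x : Fin n) : (x + 1) + 3 = x + 4 := by rw [add_assoc]; norm_num; ext; simp [Fin.val_add]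

private lemma adj_iff (hn : 5 ≤ n) (u v : Fin n) :
    (SimpleGraph.cycleGraph n).Adj u v ↔ u = v + 1 ∨ v = u + 1 := by
  rw [SimpleGraph.cycleGraph_adj']
  have h1 : ((1 : Fin n) : ℕ) = 1 := finval1 hn
  constructor
  · rintro (h | h)
    · left
      have h' : u - v = 1 := Fin.ext (by rw [h, h1])
      rwa [sub_eq_iff_eq_add, add_comm] at h'
    · right
      have h' : v - u = 1 := Fin.ext (by rw [h, h1])
      rwa [sub_eq_iff_eq_add, add_comm] at h'
  · rintro (h | h)
    · left; rw [h]; simpa using h1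
    · right; rw [h]; simpa using h1

private lemma adjS (hn : 5 ≤ n) (x : Fin n) :
    (SimpleGraph.cycleGraph n).Adj x (x + 1) :=
  (adj_iff hn x (x+1)).2 (Or.inr rfl)

private lemma nadj2 (hn : 5 ≤ n) (x : Fin n) :
    ¬ (SimpleGraph.cycleGraph n).Adj x (x + 2) := by
  rw [adj_iff hn]
  rintro (h | h)
  · rw [add23] at h
    exact fne3 hn x h.symm
  · have h' := add_left_cancel h
    have := congrArg Fin.val h'
    rw [finval2 hn, finval1 hn] at this
    omega

private lemma nadj3 (hn : 5 ≤ n) (x : Fin n) :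
    ¬ (SimpleGraph.cycleGraph n).Adj x (x + 3) := by
  rw [adj_iff hn]
  rintro (h | h)
  · rw [add34] at h
    exact fne4 hn x h.symm
  · rw [show x + 3 = (x+1) + 2 from (add13 x).symm] at h
    exact fne2 hn (x+1) h

/-- The key "forbidden pattern" lemma: four sums in increasing order whose
membership pattern in `[θ₁,θ₂) ∪ [θ₃,∞)` is in/out/in/out is impossible. -/
private lemma FC {θ₁ θ₂ θ₃ : ℝ} (h12 : θ₁ < θ₂) (h23 : θ₂ < θ₃) {s1 s2 s3 s4 : ℝ}
    (P1 : (θ₁ ≤ s1 ∧ s1 < θ₂) ∨ θ₃ ≤ s1)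
    (P2 : ¬ ((θ₁ ≤ s2 ∧ s2 < θ₂) ∨ θ₃ ≤ s2))
    (P3 : (θ₁ ≤ s3 ∧ s3 < θ₂) ∨ θ₃ ≤ s3)
    (P4 : ¬ ((θ₁ ≤ s4 ∧ s4 < θ₂) ∨ θ₃ ≤ s4))
    (L1 : s1 ≤ s2) (L2 : s2 ≤ s3) (L3 : s3 ≤ s4) : False := by
  push_neg at P2 P4
  have hb1 : θ₁ ≤ s1 := by rcases P1 with ⟨h, _⟩ | h <;> linarith
  have hb2 : θ₂ ≤ s2 := P2.1 (by linarith)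
  have hb3 : θ₃ ≤ s3 := by rcases P3 with ⟨h, h'⟩ | h <;> linarith
  linarith [P4.2]

end CnNotThreeThresholdAux

open CnNotThreeThresholdAux in
/-- For every n ≥ 5, Cₙ is not a 3-threshold graph. -/
theorem cn_not_three_threshold (n : ℕ) (hn : 5 ≤ n) :
    ¬ ∃ (θ₁ θ₂ θ₃ : ℝ), θ₁ < θ₂ ∧ θ₂ < θ₃ ∧ ∃ r : Fin n → ℝ,
      ∀ u v : Fin n, u ≠ v →
        ((SimpleGraph.cycleGraph n).Adj u v ↔
          (θ₁ ≤ r u + r v ∧ r u + r v < θ₂) ∨ θ₃ ≤ r u + r v) := by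
  haveI : NeZero n := ⟨by omega⟩
  rintro ⟨θ₁, θ₂, θ₃, h12, h23, r, H⟩
  obtain ⟨m, hm⟩ := Finite.exists_min r
  obtain ⟨M, hM⟩ := Finite.exists_max r
  set G := SimpleGraph.cycleGraph n with hG
  have hE : ∀ u v : Fin n, G.Adj u v →
      ((θ₁ ≤ r u + r v ∧ r u + r v < θ₂) ∨ θ₃ ≤ r u + r v) :=
    fun u v h => (H u v h.ne).mp h
  have hN : ∀ u v : Fin n, u ≠ v → ¬ G.Adj u v →
      ¬ ((θ₁ ≤ r u + r v ∧ r u + r v < θ₂) ∨ θ₃ ≤ r u + r v) :=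
    fun u v hne hna hp => hna ((H u v hne).mpr hp)
  by_cases hmM : m = M
  · -- all ranks are equal
    subst hmM
    exact FC h12 h23
      (hE m (m+1) (adjS hn m))
      (hN m (m+2) (fne2 hn m).symm (nadj2 hn m))
      (hE m (m+1) (adjS hn m))
      (hN m (m+2) (fne2 hn m).symm (nadj2 hn m))
      (by linarith [hm (m+1), hm (m+2), hM (m+1), hM (m+2)])
      (by linarith [hm (m+1), hm (m+2), hM (m+1), hM (m+2)])
      (by linarith [hm (m+1), hm (m+2), hM (m+1), hM (m+2)])
  by_cases hadj : G.Adj m M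
  · rcases (adj_iff hn m M).1 hadj with h1 | h1
    · -- m = M + 1; base point y with M = y+2, m = y+3, a = y+4, c = y+1, d = y
      set y : Fin n := M - 2 with hy
      have e2 : y + 2 = M := by rw [hy, sub_add_cancel]
      have e3 : y + 3 = m := by rw [← add23, e2, ← h1]
      have e4 : y + 4 = m + 1 := by rw [← add34, e3]
      -- a := y+4, c := y+1, d := y
      have adj_ma : G.Adj (y+3) (y+4) := by
        rw [← add34]; exact adjS hn (y+3)
      have adj_Mc : G.Adj (y+2) (y+1) := by
        rw [← add12]; exact (adjS hn (y+1)).symm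
      have adj_dc : G.Adj y (y+1) := adjS hn y
      have nadj_ac : ¬ G.Adj (y+4) (y+1) := by
        rw [← add14]; exact fun h => nadj3 hn (y+1) h.symm
      have nadj_aM : ¬ G.Adj (y+4) (y+2) := by
        rw [← add24]; exact fun h => nadj2 hn (y+2) h.symm
      have nadj_mc : ¬ G.Adj (y+3) (y+1) := by
        rw [← add13]; exact fun h => nadj2 hn (y+1) h.symm
      have nadj_dM : ¬ G.Adj y (y+2) := nadj2 hn y
      have ne_ac : (y+4) ≠ (y+1) := by
        rw [← add14]; exact fne3 hn (y+1)
      have ne_aM : (y+4) ≠ (y+2) := by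
        rw [← add24]; exact fne2 hn (y+2)
      have ne_mc : (y+3) ≠ (y+1) := by
        rw [← add13]; exact fne2 hn (y+1)
      have ne_dM : y ≠ (y+2) := (fne2 hn y).symm
      rcases le_total (r (y+1)) (r (y+4)) with hca | hac
      · exact FC h12 h23
          (hE _ _ adj_ma) (hN _ _ ne_ac nadj_ac) (hE _ _ adj_Mc) (hN _ _ ne_aM nadj_aM)
          (by have := hm (y+1); rw [e3]; linarith)
          (by have := hM (y+4); rw [e2]; linarith)
          (by linarith)
      · exact FC h12 h23
          (hE _ _ adj_ma) (hN _ _ ne_mc nadj_mc) (hE _ _ adj_dc) (hN _ _ ne_dM nadj_dM)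
          (by linarith)
          (by have := hm y; rw [e3]; linarith)
          (by have := hM (y+1); rw [e2]; linarith)
    · -- M = m + 1; base point x := m - 1: a = x, m = x+1, M = x+2, c = x+3, d = x+4
      set x : Fin n := m - 1 with hx
      have e1 : x + 1 = m := by rw [hx, sub_add_cancel]
      have e2 : x + 2 = M := by rw [← add12, e1, ← h1]
      have adj_ma : G.Adj (x+1) x := (adjS hn x).symm
      have adj_Mc : G.Adj (x+2) (x+3) := by
        rw [← add23]; exact adjS hn (x+2)
      have adj_dc : G.Adj (x+4) (x+3) := by
        rw [← add34]; exact (adjS hn (x+3)).symm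
      have nadj_ac : ¬ G.Adj x (x+3) := nadj3 hn x
      have nadj_aM : ¬ G.Adj x (x+2) := nadj2 hn x
      have nadj_mc : ¬ G.Adj (x+1) (x+3) := by
        rw [← add13]; exact nadj2 hn (x+1)
      have nadj_dM : ¬ G.Adj (x+4) (x+2) := by
        rw [← add24]; exact fun h => nadj2 hn (x+2) h.symm
      have ne_ac : x ≠ (x+3) := (fne3 hn x).symm
      have ne_aM : x ≠ (x+2) := (fne2 hn x).symm
      have ne_mc : (x+1) ≠ (x+3) := by
        rw [← add13]; exact (fne2 hn (x+1)).symm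
      have ne_dM : (x+4) ≠ (x+2) := by
        rw [← add24]; exact fne2 hn (x+2)
      rcases le_total (r (x+3)) (r x) with hca | hac
      · exact FC h12 h23
          (hE _ _ adj_ma) (hN _ _ ne_ac nadj_ac) (hE _ _ adj_Mc) (hN _ _ ne_aM nadj_aM)
          (by have := hm (x+3); rw [e1]; linarith)
          (by have := hM x; rw [e2]; linarith)
          (by linarith)
      · exact FC h12 h23
          (hE _ _ adj_ma) (hN _ _ ne_mc nadj_mc) (hE _ _ adj_dc) (hN _ _ ne_dM nadj_dM)
          (by linarith)
          (by have := hm (x+4); rw [e1]; linarith)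
          (by have := hM (x+3); rw [e2]; linarith)
  · -- m not adjacent to M, m ≠ M
    -- find p adjacent to M but not to m, with its "far" neighbour d not adjacent to M
    obtain ⟨p, d, hMp, hpd, hdM_ne, hdM_nadj, hmp_nadj, hpm_ne⟩ :
        ∃ p d : Fin n, G.Adj M p ∧ G.Adj p d ∧ d ≠ M ∧ ¬ G.Adj d M ∧
          ¬ G.Adj m p ∧ p ≠ m := by
      have cand2 : ∃ q : Fin n, q + 1 = M := ⟨M - 1, sub_add_cancel M 1⟩
      obtain ⟨q, hq⟩ := cand2
      obtain ⟨z, hz⟩ : ∃ z : Fin n, z + 1 = q := ⟨q - 1, sub_add_cancel q 1⟩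
      have hzM : z + 2 = M := by rw [← add12, hz, hq]
      by_cases hc1 : G.Adj m (M+1)
      · -- use the other side: p := q (= M-1), d := z (= M-2)
        refine ⟨q, z, ?_, ?_, ?_, ?_, ?_, ?_⟩
        · exact (by rw [← hq]; exact adjS hn q : G.Adj q M).symm
        · exact (by rw [← hz]; exact adjS hn z : G.Adj z q).symm
        · rw [← hzM]; exact (fne2 hn z).symm
        · rw [← hzM]; exact nadj2 hn z
        · intro h
          rcases (adj_iff hn m q).1 h with h' | h'
          · -- m = q + 1 = M
            exact hmM (h'.trans hq)
          · -- q = m + 1, so M = m + 2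
            have hM2 : M = m + 2 := by rw [← hq, h']; exact add12 m
            rcases (adj_iff hn m (M+1)).1 hc1 with h'' | h''
            · -- m = M + 2
              have hmM2 : m = M + 2 := h''.trans (add12 M)
              have hm4 : m = m + 4 := hmM2.trans (by rw [hM2]; exact add24 m)
              exact fne4 hn m hm4.symm
            · -- M + 1 = m + 1, so M = m
              exact hmM (add_right_cancel h'').symm
        · intro h
          exact hadj ((adj_iff hn m M).2 (Or.inr (by rw [← hq, h])))
      · -- p := M+1, d := M+2
        refine ⟨M+1, M+2, adjS hn M, ?_, fne2 hn M, ?_, hc1, ?_⟩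
        · rw [← add12]; exact adjS hn (M+1)
        · exact fun h => nadj2 hn M h.symm
        · intro h
          exact hadj ((adj_iff hn m M).2 (Or.inl h.symm))
    have hpM_ne : p ≠ M := hMp.ne.symm
    -- m's two neighbours
    obtain ⟨u2, hu2⟩ : ∃ u2 : Fin n, u2 + 1 = m := ⟨m - 1, sub_add_cancel m 1⟩
    set u1 : Fin n := m + 1 with hu1
    have adj_mu1 : G.Adj m u1 := adjS hn m
    have adj_mu2 : G.Adj m u2 := by rw [← hu2]; exact (adjS hn u2).symm
    have hu12 : u1 ≠ u2 := by
      intro h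
      have : m + 2 = m := by rw [← add12, ← hu1, h, hu2]
      exact fne2 hn m this
    have hu1M : u1 ≠ M := by
      intro h
      exact hadj ((adj_iff hn m M).2 (Or.inr (by rw [← h])))
    have hu2M : u2 ≠ M := by
      intro h
      exact hadj ((adj_iff hn m M).2 (Or.inl (by rw [← hu2, h])))
    have hpu1 : p ≠ u1 := by
      intro h
      exact hmp_nadj (by rw [h]; exact adj_mu1)
    have hpu2 : p ≠ u2 := by
      intro h
      exact hmp_nadj (by rw [h]; exact adj_mu2)
    by_cases hcc : r p ≤ r u1 ∧ r p ≤ r u2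
    · -- choose s with ¬ Adj s p, and t with ¬ Adj t M
      have hs : ¬ G.Adj u1 p ∨ ¬ G.Adj u2 p := by
        by_contra hcon
        push_neg at hcon
        obtain ⟨h1', h2'⟩ := hcon
        rcases (adj_iff hn u1 p).1 h1' with a1 | a1 <;>
          rcases (adj_iff hn u2 p).1 h2' with a2 | a2 <;>
          rcases (adj_iff hn M p).1 hMp with a3 | a3
        · exact hu12 (a1.trans a2.symm)
        · exact hu12 (a1.trans a2.symm)
        · exact hu1M (a1.trans a3.symm)
        · exact hu2M (add_right_cancel (a2.symm.trans a3))
        · exact hu2M (a2.trans a3.symm)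
        · exact hu1M (add_right_cancel (a1.symm.trans a3))
        · exact hu12 (add_right_cancel (a1.symm.trans a2))
        · exact hu12 (add_right_cancel (a1.symm.trans a2))
      have ht : ¬ G.Adj u1 M ∨ ¬ G.Adj u2 M := by
        by_contra hcon
        push_neg at hcon
        obtain ⟨h1', h2'⟩ := hcon
        rcases (adj_iff hn u1 M).1 h1' with a1 | a1 <;>
          rcases (adj_iff hn u2 M).1 h2' with a2 | a2
        · exact hu12 (a1.trans a2.symm)
        · -- a1 : u1 = M + 1, a2 : M = u2 + 1 = m
          exact hmM (a2.trans hu2).symm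
        · -- a1 : M = u1 + 1 = m + 2, a2 : u2 = M + 1 so m = M + 2
          have hMm2 : M = m + 2 := by rw [a1, hu1]; exact add12 m
          have hmM2 : m = M + 2 := by rw [← hu2, a2]; exact add12 M
          have hm4 : m = m + 4 := hmM2.trans (by rw [hMm2]; exact add24 m)
          exact fne4 hn m hm4.symm
        · exact hu12 (add_right_cancel (a1.symm.trans a2))
      obtain ⟨s, adj_ms, hsp_ne, nadj_sp, hsp_r⟩ :
          ∃ s : Fin n, G.Adj m s ∧ s ≠ p ∧ ¬ G.Adj s p ∧ True := by
        rcases hs with h | h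
        · exact ⟨u1, adj_mu1, (Ne.symm hpu1), h, trivial⟩
        · exact ⟨u2, adj_mu2, (Ne.symm hpu2), h, trivial⟩
      obtain ⟨t, htM_ne, nadj_tM, htp_r⟩ :
          ∃ t : Fin n, t ≠ M ∧ ¬ G.Adj t M ∧ r p ≤ r t := by
        rcases ht with h | h
        · exact ⟨u1, hu1M, h, hcc.1⟩
        · exact ⟨u2, hu2M, h, hcc.2⟩
      exact FC h12 h23
        (hE _ _ adj_ms) (hN _ _ hsp_ne nadj_sp) (hE _ _ hMp.symm) (hN _ _ htM_ne nadj_tM)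
        (by have := hm p; linarith)
        (by have := hM s; linarith)
        (by linarith)
    · push_neg at hcc
      obtain ⟨a, adj_ma, hap⟩ : ∃ a : Fin n, G.Adj m a ∧ r a ≤ r p := by
        rcases le_or_gt (r p) (r u1) with h | h
        · exact ⟨u2, adj_mu2, le_of_lt (hcc h)⟩
        · exact ⟨u1, adj_mu1, le_of_lt h⟩
      exact FC h12 h23
        (hE _ _ adj_ma) (hN _ _ (Ne.symm hpm_ne) hmp_nadj) (hE _ _ hpd.symm) (hN _ _ hdM_ne hdM_nadj)
        (by linarith)
        (by have := hm d; linarith)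
        (by have := hM p; linarith)
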